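/- For all integers d ≥ 2 and l ≥ 2 there exists a spider with diameter exactly d, exactly l leaves, and exactly e(d,l) edges, where e(d,l) = d·l/2 if d is even and e(d,l) = (d − 1)·l/2 + 1 if d is odd. -/

import Mathlib

open SimpleGraph

/-- The number of edges of a simple graph. -/
noncomputable def edgeCount {V : Type*} (G : SimpleGraph V) : ℕ := G.edgeSet.ncard

/-- The degree of a vertex. -/
noncomputable def deg {V : Type*} (G : SimpleGraph V) (v : V) : ℕ := (G.neighborSet v).ncard

/-- The number of leaves (vertices of degree 1). -/
noncomputable def leafCount {V : Type*} (G : SimpleGraph V) : ℕ := {v | deg G v = 1}.ncard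

/-- The diameter: the maximum distance between two vertices. -/
noncomputable def treeDiam {V : Type*} (G : SimpleGraph V) : ℕ :=
  sSup {n | ∃ u v : V, G.dist u v = n}

/-- κ(T) = (number of leaves) + (diameter) - 2. -/
noncomputable def kappa {V : Type*} (G : SimpleGraph V) : ℕ :=
  leafCount G + treeDiam G - 2

/-- A graph is a path graph if it is acyclic, preconnected, and has maximum degree ≤ 2
(the empty graph counts as a path). -/
def IsPathGraph {W : Type*} (H : SimpleGraph W) : Prop :=
  H.IsAcyclic ∧ H.Preconnected ∧
    ∀ v a b c : W, H.Adj v a → H.Adj v b → H.Adj v c → a = b ∨ a = c ∨ b = c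

/-- A caterpillar is a tree whose non-leaf vertices induce a path. -/
def IsCaterpillar {V : Type*} (G : SimpleGraph V) : Prop :=
  G.IsTree ∧ IsPathGraph (G.induce {v | 2 ≤ deg G v})

/-- The quotient graph of `G` along a map `c` on vertices: two images are adjacent iff
they are distinct and some edge of `G` joins their fibers. -/
def quotientGraph {V W : Type*} (G : SimpleGraph V) (c : V → W) : SimpleGraph W where
  Adj a b := a ≠ b ∧ ∃ u v : V, c u = a ∧ c v = b ∧ G.Adj u v
  symm := by
    constructor
    rintro a b ⟨hne, u, v, hu, hv, h⟩
    exact ⟨hne.symm, v, u, hv, hu, h.symm⟩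
  loopless := by
    constructor
    rintro a ⟨hne, -⟩
    exact hne rfl

/-- A spider is a tree with at most one vertex of degree greater than 2. -/
def IsSpider {V : Type*} (G : SimpleGraph V) : Prop :=
  G.IsTree ∧ ∀ u v : V, 3 ≤ deg G u → 3 ≤ deg G v → u = v

/-- `k` is the maximum number of edges of a vertex-induced subgraph of `G`
that is a caterpillar. -/
def MaxInducedCaterpillar {V : Type*} (G : SimpleGraph V) (k : ℕ) : Prop :=
  IsGreatest {j : ℕ | ∃ s : Set V, IsCaterpillar (G.induce s) ∧ edgeCount (G.induce s) = j} k

namespace SpiderHelper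

open SimpleGraph Walk Finset

/-- Walks change a 1-Lipschitz integer function by at most their length. -/
lemma abs_le_walk_length {V : Type*} {G : SimpleGraph V} (f : V → ℤ)
    (hf : ∀ a b : V, G.Adj a b → |f a - f b| ≤ 1) {u v : V} (w : G.Walk u v) :
    |f u - f v| ≤ w.length := by
  induction w with
  | nil => simp
  | @cons a b c h p ih =>
      calc |f a - f c| ≤ |f a - f b| + |f b - f c| := abs_sub_le (f a) (f b) (f c)
        _ ≤ 1 + p.length := add_le_add (hf a b h) ih
        _ = ((p.length + 1 : ℕ) : ℤ) := by push_cast; ring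
        _ = ((Walk.cons h p).length : ℤ) := by simp

/-- A graph in which every edge joins a vertex to its designated parent of
smaller rank is acyclic. -/
lemma acyclic_of_parent {V : Type*} (G : SimpleGraph V) (par : V → V) (r : V → ℕ)
    (hpar : ∀ u v : V, G.Adj u v → (v = par u ∧ r v < r u) ∨ (u = par v ∧ r u < r v)) :
    G.IsAcyclic := by
  classical
  intro v0 c hc
  have hne : c.support.toFinset.Nonempty := by
    exact ⟨v0, List.mem_toFinset.mpr c.start_mem_support⟩
  obtain ⟨u, hu_mem, hu_max⟩ := Finset.exists_max_image c.support.toFinset r hne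
  rw [List.mem_toFinset] at hu_mem
  have hcyc : (c.rotate u hu_mem).IsCycle := hc.rotate hu_mem
  have hsupp : ∀ y ∈ (c.rotate u hu_mem).support, r y ≤ r u := by
    intro y hy
    rw [Walk.support_eq_cons] at hy
    rcases List.mem_cons.mp hy with rfl | hy
    · exact le_rfl
    · have := (Walk.support_rotate c u hu_mem).mem_iff.mp hy
      have : y ∈ c.support := by
        rw [Walk.support_eq_cons c]; exact List.mem_cons_of_mem _ this
      exact hu_max y (List.mem_toFinset.mpr this)
  set c' := c.rotate u hu_mem with hc'def
  clear_value c'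
  have hnn : ¬ c'.Nil := by
    intro h
    rw [Walk.nil_iff_eq_nil] at h
    subst h
    exact Walk.IsCycle.not_of_nil hcyc
  obtain ⟨w, huw, p, rfl⟩ := Walk.not_nil_iff.mp hnn
  -- p : Walk w u, nonempty since cycle length ≥ 3
  have hplen : 2 ≤ p.length := by
    have := hcyc.three_le_length
    simp only [Walk.length_cons] at this
    omega
  have hpnn : ¬ p.reverse.Nil := by
    rw [Walk.nil_iff_length_eq, Walk.length_reverse]
    omega
  obtain ⟨x, hux, q, hq⟩ := Walk.not_nil_iff.mp hpnn
  -- x in support of p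
  have hx_mem : x ∈ p.support := by
    have : x ∈ p.reverse.support := by
      rw [hq, Walk.support_cons]
      exact List.mem_cons_of_mem _ q.start_mem_support
    rwa [Walk.support_reverse, List.mem_reverse] at this
  have hw_mem : w ∈ p.support := p.start_mem_support
  have hw_le : r w ≤ r u := hsupp w (by rw [Walk.support_cons]; exact List.mem_cons_of_mem _ hw_mem)
  have hx_le : r x ≤ r u := hsupp x (by rw [Walk.support_cons]; exact List.mem_cons_of_mem _ hx_mem)
  have hw_par : w = par u := by
    rcases hpar u w huw with ⟨h, _⟩ | ⟨_, h⟩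
    · exact h
    · omega
  have hx_par : x = par u := by
    rcases hpar u x hux with ⟨h, _⟩ | ⟨_, h⟩
    · exact h
    · omega
  -- edge contradiction
  have hnodup : (Walk.cons huw p).edges.Nodup := hcyc.edges_nodup
  rw [Walk.edges_cons] at hnodup
  have hnotmem : s(u, w) ∉ p.edges := (List.nodup_cons.mp hnodup).1
  have hmem : s(u, x) ∈ p.edges := by
    have : s(u, x) ∈ p.reverse.edges := by
      rw [hq, Walk.edges_cons]; exact List.mem_cons_self
    rwa [Walk.edges_reverse, List.mem_reverse] at this
  have hwx : w = x := hw_par.trans hx_par.symm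
  rw [← hwx] at hmem
  exact hnotmem hmem

end SpiderHelper

namespace SpiderHelper

open SimpleGraph Finset

variable {l : ℕ} {L : Fin l → ℕ}

/-- Vertex type of the spider: a center plus legs. -/
abbrev Vtx (l : ℕ) (L : Fin l → ℕ) : Type := Option (Σ i : Fin l, Fin (L i))

/-- Depth of a vertex (distance from center, as intended). -/
def depth : Vtx l L → ℕ
  | none => 0
  | some x => x.2.val + 1

/-- Parent of a non-center vertex. -/
def parent (x : Σ i : Fin l, Fin (L i)) : Vtx l L :=
  if h : x.2.val = 0 then none
  else some ⟨x.1, ⟨x.2.val - 1, lt_of_le_of_lt (Nat.sub_le _ _) x.2.isLt⟩⟩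

lemma depth_parent (x : Σ i : Fin l, Fin (L i)) : depth (parent x) = x.2.val := by
  unfold parent
  split
  · simp [depth]; omega
  · simp [depth]; omega

/-- The spider graph. -/
def spider (l : ℕ) (L : Fin l → ℕ) : SimpleGraph (Vtx l L) where
  Adj u v := (∃ x, u = some x ∧ v = parent x) ∨ (∃ x, v = some x ∧ u = parent x)
  symm := by
    constructor
    rintro u v (⟨x, h1, h2⟩ | ⟨x, h1, h2⟩)
    · exact Or.inr ⟨x, h1, h2⟩
    · exact Or.inl ⟨x, h1, h2⟩
  loopless := by
    constructor
    rintro u (⟨x, rfl, hp⟩ | ⟨x, rfl, hp⟩) <;>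
    · have := congrArg depth hp
      rw [depth_parent] at this
      simp [depth] at this

lemma adj_parent (x : Σ i : Fin l, Fin (L i)) : (spider l L).Adj (some x) (parent x) :=
  Or.inl ⟨x, rfl, rfl⟩

lemma parent_eq_some_iff {y : Σ i : Fin l, Fin (L i)} {x : Σ i : Fin l, Fin (L i)} :
    parent y = some x ↔ y.1 = x.1 ∧ y.2.val = x.2.val + 1 := by
  obtain ⟨j, m⟩ := y
  obtain ⟨i, k⟩ := x
  unfold parent
  split
  · next h0 =>
    constructor
    · intro h; exact absurd h (by simp)
    · rintro ⟨-, h2⟩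
      simp only at h2 h0
      omega
  · next h0 =>
    rw [Option.some.injEq]
    constructor
    · intro h
      have h2 : m.val - 1 = k.val := congrArg (fun z : (Σ i : Fin l, Fin (L i)) => z.2.val) h
      have h1 : j = i := congrArg Sigma.fst h
      have h0' : ¬ m.val = 0 := h0
      refine ⟨h1, ?_⟩
      show m.val = k.val + 1
      omega
    · rintro ⟨h1, h2⟩
      have h0' : ¬ m.val = 0 := h0
      have h1' : j = i := h1
      have h2' : m.val = k.val + 1 := h2
      subst h1'
      have hval : m.val - 1 = k.val := by omega
      exact Sigma.ext rfl (heq_of_eq (Fin.ext hval))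

lemma parent_eq_none_iff {y : Σ i : Fin l, Fin (L i)} :
    parent y = none ↔ y.2.val = 0 := by
  unfold parent
  split <;> simp_all

lemma adj_none_iff {v : Vtx l L} :
    (spider l L).Adj none v ↔ ∃ y : Σ i : Fin l, Fin (L i), v = some y ∧ y.2.val = 0 := by
  constructor
  · rintro (⟨x, hx, _⟩ | ⟨x, rfl, hp⟩)
    · exact absurd hx (by simp)
    · exact ⟨x, rfl, parent_eq_none_iff.mp hp.symm⟩
  · rintro ⟨y, rfl, h0⟩
    exact Or.inr ⟨y, rfl, (parent_eq_none_iff.mpr h0).symm⟩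

lemma adj_some_iff {x : Σ i : Fin l, Fin (L i)} {v : Vtx l L} :
    (spider l L).Adj (some x) v ↔
      v = parent x ∨ ∃ y, v = some y ∧ y.1 = x.1 ∧ y.2.val = x.2.val + 1 := by
  constructor
  · rintro (⟨z, hz, rfl⟩ | ⟨y, rfl, hp⟩)
    · obtain rfl : x = z := by injection hz
      exact Or.inl rfl
    · exact Or.inr ⟨y, rfl, parent_eq_some_iff.mp hp.symm⟩
  · rintro (rfl | ⟨y, rfl, h1, h2⟩)
    · exact adj_parent x
    · exact Or.inr ⟨y, rfl, (parent_eq_some_iff.mpr ⟨h1, h2⟩).symm⟩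

end SpiderHelper

namespace SpiderHelper

open SimpleGraph Finset

variable {l : ℕ} {L : Fin l → ℕ}

lemma spider_acyclic : (spider l L).IsAcyclic := by
  apply acyclic_of_parent (spider l L)
    (fun v => match v with | none => none | some x => parent x) depth
  rintro u v (⟨x, rfl, rfl⟩ | ⟨x, rfl, rfl⟩)
  · left
    refine ⟨rfl, ?_⟩
    rw [depth_parent]
    simp [depth]
  · right
    refine ⟨rfl, ?_⟩
    rw [depth_parent]
    simp [depth]

lemma exists_walk_center (n : ℕ) : ∀ v : Vtx l L, depth v ≤ n →
    ∃ w : (spider l L).Walk v none, w.length = depth v := by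
  induction n with
  | zero =>
    rintro (_ | x) h
    · exact ⟨Walk.nil, rfl⟩
    · simp [depth] at h
  | succ n ih =>
    rintro (_ | x) h
    · exact ⟨Walk.nil, rfl⟩
    · obtain ⟨w, hw⟩ := ih (parent x) (by rw [depth_parent]; simp [depth] at h; omega)
      refine ⟨Walk.cons (adj_parent x) w, ?_⟩
      rw [Walk.length_cons, hw, depth_parent]
      simp [depth]

lemma exists_walk_center' (v : Vtx l L) :
    ∃ w : (spider l L).Walk v none, w.length = depth v :=
  exists_walk_center (depth v) v le_rfl

lemma spider_preconnected : (spider l L).Preconnected := by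
  intro u v
  obtain ⟨wu, -⟩ := exists_walk_center' u
  obtain ⟨wv, -⟩ := exists_walk_center' v
  exact (wu.append wv.reverse).reachable

lemma spider_connected : (spider l L).Connected := by
  rw [connected_iff]
  exact ⟨spider_preconnected, ⟨none⟩⟩

lemma spider_isTree : (spider l L).IsTree :=
  ⟨spider_connected, spider_acyclic⟩

lemma dist_le_depth (u v : Vtx l L) :
    (spider l L).dist u v ≤ depth u + depth v := by
  obtain ⟨wu, hu⟩ := exists_walk_center' u
  obtain ⟨wv, hv⟩ := exists_walk_center' v
  have := SimpleGraph.dist_le (wu.append wv.reverse)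
  rwa [Walk.length_append, Walk.length_reverse, hu, hv] at this

lemma deg_none (hl0 : ∀ i, 0 < L i) : deg (spider l L) none = l := by
  have hset : (spider l L).neighborSet none =
      Set.range (fun i : Fin l => (some ⟨i, ⟨0, hl0 i⟩⟩ : Vtx l L)) := by
    ext v
    simp only [mem_neighborSet, Set.mem_range]
    rw [adj_none_iff]
    constructor
    · rintro ⟨⟨i, k⟩, rfl, h0⟩
      refine ⟨i, ?_⟩
      have h0' : (0 : ℕ) = k.val := h0.symm
      exact congrArg some (Sigma.ext rfl (heq_of_eq (Fin.ext h0')))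
    · rintro ⟨i, rfl⟩
      exact ⟨⟨i, ⟨0, hl0 i⟩⟩, rfl, rfl⟩
  have hinj : Function.Injective (fun i : Fin l => (some ⟨i, ⟨0, hl0 i⟩⟩ : Vtx l L)) := by
    intro a b h
    simp only [Option.some.injEq] at h
    exact congrArg Sigma.fst h
  rw [deg, hset, ← Set.image_univ, Set.ncard_image_of_injective _ hinj, Set.ncard_univ,
    Nat.card_eq_fintype_card, Fintype.card_fin]

lemma deg_some (x : Σ i : Fin l, Fin (L i)) :
    deg (spider l L) (some x) = if x.2.val + 1 = L x.1 then 1 else 2 := by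
  split
  · next htip =>
    have hset : (spider l L).neighborSet (some x) = {parent x} := by
      ext v
      simp only [mem_neighborSet, Set.mem_singleton_iff]
      rw [adj_some_iff]
      constructor
      · rintro (rfl | ⟨y, rfl, h1, h2⟩)
        · rfl
        · have hlt := y.2.isLt
          have hLL : L y.1 = L x.1 := congrArg L h1
          omega
      · rintro rfl
        exact Or.inl rfl
    rw [deg, hset, Set.ncard_singleton]
  · next htip =>
    have hlt : x.2.val + 1 < L x.1 := by
      have := x.2.isLt
      omega
    have hset : (spider l L).neighborSet (some x) =
        {parent x, some ⟨x.1, ⟨x.2.val + 1, hlt⟩⟩} := by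
      ext v
      simp only [mem_neighborSet, Set.mem_insert_iff, Set.mem_singleton_iff]
      rw [adj_some_iff]
      constructor
      · rintro (rfl | ⟨⟨j, m⟩, rfl, h1, h2⟩)
        · exact Or.inl rfl
        · right
          have h1' : j = x.1 := h1
          subst h1'
          have h2' : m.val = x.2.val + 1 := h2
          exact congrArg some (Sigma.ext rfl (heq_of_eq (Fin.ext h2')))
      · rintro (rfl | rfl)
        · exact Or.inl rfl
        · exact Or.inr ⟨⟨x.1, ⟨x.2.val + 1, hlt⟩⟩, rfl, rfl, rfl⟩
    rw [deg, hset, Set.ncard_pair]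
    intro h
    have := congrArg depth h
    rw [depth_parent] at this
    simp only [depth] at this
    omega

lemma leafCount_spider (hl0 : ∀ i, 0 < L i) (hl2 : 2 ≤ l) :
    leafCount (spider l L) = l := by
  have hset : {v : Vtx l L | deg (spider l L) v = 1} =
      Set.range (fun i : Fin l =>
        (some ⟨i, ⟨L i - 1, Nat.sub_lt (hl0 i) one_pos⟩⟩ : Vtx l L)) := by
    ext v
    simp only [Set.mem_setOf_eq, Set.mem_range]
    constructor
    · rcases v with _ | ⟨i, k⟩
      · intro hv
        rw [deg_none hl0] at hv
        omega
      · intro hv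
        rw [deg_some] at hv
        split at hv
        · next htip =>
          refine ⟨i, ?_⟩
          have h2 : (L i - 1 : ℕ) = k.val := by
            have hk : k.val + 1 = L i := htip
            omega
          exact congrArg some (Sigma.ext rfl (heq_of_eq (Fin.ext h2)))
        · omega
    · rintro ⟨i, rfl⟩
      rw [deg_some]
      dsimp only
      rw [if_pos (show L i - 1 + 1 = L i by have := hl0 i; omega)]
  have hinj : Function.Injective (fun i : Fin l =>
      (some ⟨i, ⟨L i - 1, Nat.sub_lt (hl0 i) one_pos⟩⟩ : Vtx l L)) := by
    intro a b h
    simp only [Option.some.injEq] at h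
    exact congrArg Sigma.fst h
  rw [leafCount, hset, ← Set.image_univ, Set.ncard_image_of_injective _ hinj, Set.ncard_univ,
    Nat.card_eq_fintype_card, Fintype.card_fin]

lemma spider_isSpider (hl0 : ∀ i, 0 < L i) : IsSpider (spider l L) := by
  refine ⟨spider_isTree, ?_⟩
  have key : ∀ u : Vtx l L, 3 ≤ deg (spider l L) u → u = none := by
    rintro (_ | x) h
    · rfl
    · rw [deg_some] at h
      split at h <;> omega
  intro u v hu hv
  rw [key u hu, key v hv]

lemma edgeCount_spider : edgeCount (spider l L) = ∑ i : Fin l, L i := by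
  rw [edgeCount, ← Nat.card_coe_set_eq]
  have hbij : Function.Bijective (fun x : Σ i : Fin l, Fin (L i) =>
      (⟨s(some x, parent x), adj_parent x⟩ : (spider l L).edgeSet)) := by
    constructor
    · intro x y h
      have h' := congrArg Subtype.val h
      simp only [Sym2.eq_iff] at h'
      rcases h' with ⟨h1, -⟩ | ⟨h1, h2⟩
      · exact Option.some.inj h1
      · exfalso
        have d1 := congrArg depth h1
        have d2 := congrArg depth h2
        rw [depth_parent] at d1 d2
        simp only [depth] at d1 d2
        omega
    · rintro ⟨e, he⟩
      revert he
      refine Sym2.ind (fun u v he => ?_) e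
      rw [SimpleGraph.mem_edgeSet] at he
      rcases he with ⟨x, rfl, rfl⟩ | ⟨x, rfl, rfl⟩
      · exact ⟨x, rfl⟩
      · exact ⟨x, Subtype.ext Sym2.eq_swap⟩
  rw [← Nat.card_eq_of_bijective _ hbij, Nat.card_eq_fintype_card, Fintype.card_sigma]
  simp

/-- Signed-depth test function for lower bounds on distances. -/
def sgnDepth (i : Fin l) : Vtx l L → ℤ
  | none => 0
  | some x => if x.1 = i then (x.2.val + 1 : ℤ) else -(x.2.val + 1 : ℤ)

@[simp] lemma sgnDepth_none (i : Fin l) : sgnDepth i (none : Vtx l L) = 0 := rfl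

@[simp] lemma sgnDepth_some (i : Fin l) (x : Σ j : Fin l, Fin (L j)) :
    sgnDepth i (some x) = if x.1 = i then (x.2.val + 1 : ℤ) else -(x.2.val + 1 : ℤ) := rfl

lemma sgnDepth_lipschitz (i : Fin l) :
    ∀ a b : Vtx l L, (spider l L).Adj a b → |sgnDepth i a - sgnDepth i b| ≤ 1 := by
  have key : ∀ x : Σ j : Fin l, Fin (L j), |sgnDepth i (some x) - sgnDepth i (parent x)| ≤ 1 := by
    intro x
    by_cases h0 : x.2.val = 0
    · rw [parent, dif_pos h0, sgnDepth_none, sgnDepth_some, abs_le]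
      split_ifs <;> omega
    · rw [parent, dif_neg h0, sgnDepth_some, sgnDepth_some, abs_le]
      dsimp only
      by_cases hx : x.1 = i
      · rw [if_pos hx, if_pos hx]
        constructor <;> omega
      · rw [if_neg hx, if_neg hx]
        constructor <;> omega
  rintro a b (⟨x, rfl, rfl⟩ | ⟨x, rfl, rfl⟩)
  · exact key x
  · rw [abs_sub_comm]
    exact key x

lemma dist_tip_ge {i j : Fin l} (hij : i ≠ j) (a : Fin (L i)) (b : Fin (L j)) :
    a.val + b.val + 2 ≤ (spider l L).dist (some ⟨i, a⟩) (some ⟨j, b⟩) := by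
  obtain ⟨w, hw⟩ := (spider_preconnected (some ⟨i, a⟩) (some ⟨j, b⟩)).exists_walk_length_eq_dist
  have hlip := abs_le_walk_length (sgnDepth i) (sgnDepth_lipschitz i) w
  rw [hw] at hlip
  have h1 : sgnDepth i (some ⟨i, a⟩ : Vtx l L) = (a.val + 1 : ℤ) := by
    rw [sgnDepth_some, if_pos rfl]
  have h2 : sgnDepth i (some ⟨j, b⟩ : Vtx l L) = -(b.val + 1 : ℤ) := by
    rw [sgnDepth_some, if_neg (fun h => hij h.symm)]
  rw [h1, h2, sub_neg_eq_add, abs_of_nonneg (by positivity)] at hlip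
  omega

end SpiderHelper

/-- For all `d ≥ 2` and `l ≥ 2` there exists a spider with diameter exactly
`d`, exactly `l` leaves, and exactly `e(d,l)` edges, where `e(d,l) = d·l/2` if `d` is even
and `e(d,l) = (d − 1)·l/2 + 1` if `d` is odd. -/
theorem exists_extremal_spider (d l : ℕ) (hd : 2 ≤ d) (hl : 2 ≤ l) :
    ∃ (V : Type) (_ : Fintype V) (G : SimpleGraph V),
      IsSpider G ∧ treeDiam G = d ∧ leafCount G = l ∧
      edgeCount G = (if Even d then d * l / 2 else (d - 1) * l / 2 + 1) := by
  classical
  set L : Fin l → ℕ := fun i => if i.val = 0 then (d + 1) / 2 else d / 2 with hLdef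
  have hl0 : ∀ i, 0 < L i := by
    intro i; simp only [hLdef]; split_ifs <;> omega
  have hLle : ∀ i, L i ≤ (d + 1) / 2 := by
    intro i; simp only [hLdef]; split_ifs <;> omega
  have hub : ∀ u v : SpiderHelper.Vtx l L, (SpiderHelper.spider l L).dist u v ≤ d := by
    intro u v
    rcases eq_or_ne u v with rfl | huv
    · rw [SimpleGraph.dist_self]; omega
    have hdd := SpiderHelper.dist_le_depth u v
    rcases u with _ | ⟨i, ki⟩ <;> rcases v with _ | ⟨j, kj⟩
    · exact absurd rfl huv
    · simp only [SpiderHelper.depth] at hdd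
      have := kj.isLt
      have := hLle j
      omega
    · simp only [SpiderHelper.depth] at hdd
      have := ki.isLt
      have := hLle i
      omega
    · simp only [SpiderHelper.depth] at hdd
      have h1 := ki.isLt
      have h2 := kj.isLt
      have h3 := hLle i
      have h4 := hLle j
      rcases eq_or_ne i j with rfl | hij
      · have hkk : ki.val ≠ kj.val := by
          intro h
          exact huv (congrArg some (Sigma.ext rfl (heq_of_eq (Fin.ext h))))
        omega
      · have hLsum : L i + L j ≤ (d + 1) / 2 + d / 2 := by
          have hne : ¬ (i.val = 0 ∧ j.val = 0) := by
            rintro ⟨ha, hb⟩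
            exact hij (Fin.ext (ha.trans hb.symm))
          simp only [hLdef]
          split_ifs <;> omega
        omega
  refine ⟨SpiderHelper.Vtx l L, inferInstance, SpiderHelper.spider l L,
    SpiderHelper.spider_isSpider hl0, ?_, SpiderHelper.leafCount_spider hl0 hl, ?_⟩
  · -- diameter
    have h0l : (0 : ℕ) < l := by omega
    have h1l : (1 : ℕ) < l := by omega
    set i0 : Fin l := ⟨0, h0l⟩ with hi0
    set i1 : Fin l := ⟨1, h1l⟩ with hi1
    have hi01 : i0 ≠ i1 := by
      intro h
      have := congrArg Fin.val h
      simp [hi0, hi1] at this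
    have hL0 : L i0 = (d + 1) / 2 := by simp [hLdef, hi0]
    have hL1 : L i1 = d / 2 := by simp [hLdef, hi1]
    have hlow := SpiderHelper.dist_tip_ge hi01
      ⟨L i0 - 1, Nat.sub_lt (hl0 i0) one_pos⟩ ⟨L i1 - 1, Nat.sub_lt (hl0 i1) one_pos⟩
    have hd_mem : d ∈ {n | ∃ u v : SpiderHelper.Vtx l L,
        (SpiderHelper.spider l L).dist u v = n} := by
      refine ⟨some ⟨i0, ⟨L i0 - 1, Nat.sub_lt (hl0 i0) one_pos⟩⟩,
        some ⟨i1, ⟨L i1 - 1, Nat.sub_lt (hl0 i1) one_pos⟩⟩, le_antisymm (hub _ _) ?_⟩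
      have hl0' := hl0 i0
      have hl1' := hl0 i1
      simp only at hlow
      omega
    have hbdd : ∀ n ∈ {n | ∃ u v : SpiderHelper.Vtx l L,
        (SpiderHelper.spider l L).dist u v = n}, n ≤ d := by
      rintro n ⟨u, v, rfl⟩
      exact hub u v
    have hne : {n | ∃ u v : SpiderHelper.Vtx l L,
        (SpiderHelper.spider l L).dist u v = n}.Nonempty :=
      ⟨0, none, none, SimpleGraph.dist_self⟩
    simp only [treeDiam]
    exact le_antisymm (csSup_le hne hbdd) (le_csSup ⟨d, fun n hn => hbdd n hn⟩ hd_mem)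
  · -- edge count
    rw [SpiderHelper.edgeCount_spider]
    have h0l : (0 : ℕ) < l := by omega
    have hsum : ∑ i : Fin l, L i = l * (d / 2) + ((d + 1) / 2 - d / 2) := by
      have step : ∀ i : Fin l,
          L i = d / 2 + (if i = (⟨0, h0l⟩ : Fin l) then (d + 1) / 2 - d / 2 else 0) := by
        intro i
        rcases eq_or_ne i ⟨0, h0l⟩ with rfl | hne
        · simp only [hLdef]
          simp only [if_true]
          omega
        · have hval : i.val ≠ 0 := fun h => hne (Fin.ext h)
          simp only [hLdef, if_neg hne, if_neg hval]
          omega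
      rw [Finset.sum_congr rfl (fun i _ => step i), Finset.sum_add_distrib,
        Finset.sum_const, Finset.card_univ, Fintype.card_fin, smul_eq_mul,
        Finset.sum_ite_eq' Finset.univ (⟨0, h0l⟩ : Fin l) fun _ => (d + 1) / 2 - d / 2]
      simp
    rw [hsum]
    split_ifs with hev
    · obtain ⟨m, rfl⟩ := hev
      have h1 : (m + m) / 2 = m := by omega
      have h2 : (m + m + 1) / 2 = m := by omega
      have h3 : (m + m) * l / 2 = m * l := by
        rw [show (m + m) * l = 2 * (m * l) by ring]
        omega
      rw [h1, h2, h3, Nat.mul_comm l m]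
      omega
    · obtain ⟨m, rfl⟩ := Nat.not_even_iff_odd.mp hev
      have h1 : (2 * m + 1) / 2 = m := by omega
      have h2 : (2 * m + 1 + 1) / 2 = m + 1 := by omega
      have h3 : (2 * m + 1 - 1) * l / 2 = m * l := by
        rw [show (2 * m + 1 - 1) * l = 2 * (m * l) by rw [show 2 * m + 1 - 1 = 2 * m from rfl]; ring]
        omega
      rw [h1, h2, h3, Nat.mul_comm l m]
      omega
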